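/- For all natural numbers c ≥ 1 and M ≥ 1, the periodic sequence B_{c,M} defined by f(0) = 1 and, for n ≥ 1, f(n) = c if M divides n and f(n) = 1 otherwise, is cobweb-admissible: for all 0 ≤ k ≤ n, (∏_{i=1}^{k} f(i))·(∏_{i=1}^{n-k} f(i)) divides ∏_{i=1}^{n} f(i). -/

import Mathlib

lemma prod_if_dvd (c M n : ℕ) :
    (∏ i ∈ Finset.Icc 1 n, if M ∣ i then c else 1) = c ^ (n / M) := by
  rw [show Finset.Icc 1 n = Finset.Ioc 0 n by rfl, ← Finset.prod_filter,
    Finset.prod_const, Nat.Ioc_filter_dvd_card_eq_div]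

/-- For `c ≥ 1` and `M ≥ 1`, the periodic sequence `B_{c,M}` (which is `c` at positive
multiples of `M` and `1` elsewhere) is cobweb-admissible. -/
theorem periodic_seq_cobweb_admissible (c M : ℕ) (hc : 1 ≤ c) (hM : 1 ≤ M) :
    ∀ n k : ℕ, k ≤ n →
      (∏ i ∈ Finset.Icc 1 k, if M ∣ i then c else 1)
          * (∏ i ∈ Finset.Icc 1 (n - k), if M ∣ i then c else 1) ∣
        ∏ i ∈ Finset.Icc 1 n, if M ∣ i then c else 1 := by
  intro n k hk
  rw [prod_if_dvd, prod_if_dvd, prod_if_dvd, ← pow_add]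
  exact pow_dvd_pow c (le_trans (Nat.add_div_le_add_div k (n - k) M)
    (by rw [Nat.add_sub_cancel' hk]))
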